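/- There is no unbiased estimator of an IPM on any family of distributions containing all mixtures of two fixed distributions P₀ ≠ P₁ with D(P₀,P₁) > 0. Precisely: for any m, n ∈ ℕ and any measurable function D̂ : X^m × X^n → ℝ, it cannot hold that E_{X∼P^m, Y∼Q^n}[D̂(X,Y)] = D(P,Q) for all P in the mixture family {(1−α)P₀ + αP₁ : α ∈ [0,1]} and Q = ½P₀ + ½P₁, because α ↦ E_{X∼((1−α)P₀+αP₁)^m}[D̂] is a polynomial in α of degree at most m, while α ↦ D((1−α)P₀+αP₁, ½P₀+½P₁) = |½−α|·D(P₀,P₁) is not a polynomial. -/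

import Mathlib

open MeasureTheory
open scoped Pointwise

/-- The integral probability metric defined by a class `F` of functions. -/
noncomputable def IPM {X : Type*} [MeasurableSpace X] (F : Set (X → ℝ))
    (P Q : Measure X) : ℝ :=
  sSup ((fun f => ∫ x, f x ∂P - ∫ x, f x ∂Q) '' F)

/-- The mixture `(1-α) P₀ + α P₁`. -/
noncomputable def mix {X : Type*} [MeasurableSpace X] (P₀ P₁ : Measure X) (α : ℝ) :
    Measure X :=
  ENNReal.ofReal (1 - α) • P₀ + ENNReal.ofReal α • P₁

section Aux

variable {X : Type*} [MeasurableSpace X]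

lemma integrable_of_bound (μ : Measure X) [IsFiniteMeasure μ]
    {f : X → ℝ} (hf : Measurable f) {C : ℝ} (hC : ∀ x, |f x| ≤ C) : Integrable f μ :=
  (integrable_const C).mono' hf.aestronglyMeasurable (Filter.Eventually.of_forall fun x => hC x)

lemma mix_isProb (P₀ P₁ : Measure X) [IsProbabilityMeasure P₀] [IsProbabilityMeasure P₁]
    {α : ℝ} (h0 : 0 ≤ α) (h1 : α ≤ 1) : IsProbabilityMeasure (mix P₀ P₁ α) := by
  constructor
  simp only [mix, Measure.add_apply, Measure.smul_apply, smul_eq_mul, measure_univ, mul_one]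
  rw [← ENNReal.ofReal_add (by linarith) h0]
  norm_num

lemma integral_mix (P₀ P₁ : Measure X) {α : ℝ} (h0 : 0 ≤ α) (h1 : α ≤ 1)
    {f : X → ℝ} (h0i : Integrable f P₀) (h1i : Integrable f P₁) :
    ∫ x, f x ∂(mix P₀ P₁ α) = (1 - α) * ∫ x, f x ∂P₀ + α * ∫ x, f x ∂P₁ := by
  rw [mix, integral_add_measure (h0i.smul_measure ENNReal.ofReal_ne_top)
      (h1i.smul_measure ENNReal.ofReal_ne_top),
    integral_smul_measure, integral_smul_measure,
    ENNReal.toReal_ofReal (by linarith), ENNReal.toReal_ofReal h0]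
  simp [smul_eq_mul]

lemma ipm_mix (F : Set (X → ℝ))
    (hmeas : ∀ f ∈ F, Measurable f)
    (hbdd : ∀ f ∈ F, ∃ C : ℝ, ∀ x, |f x| ≤ C)
    (hneg : ∀ f ∈ F, (fun x => -f x) ∈ F)
    (P₀ P₁ : Measure X) [IsProbabilityMeasure P₀] [IsProbabilityMeasure P₁]
    {α : ℝ} (h0 : 0 ≤ α) (h1 : α ≤ 1) :
    IPM F (mix P₀ P₁ α) (mix P₀ P₁ (1 / 2)) = |1 / 2 - α| * IPM F P₀ P₁ := by
  have hint : ∀ f ∈ F, Integrable f P₀ ∧ Integrable f P₁ := by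
    intro f hf
    obtain ⟨C, hC⟩ := hbdd f hf
    exact ⟨integrable_of_bound _ (hmeas f hf) hC, integrable_of_bound _ (hmeas f hf) hC⟩
  have hval : ∀ f ∈ F, (∫ x, f x ∂(mix P₀ P₁ α) - ∫ x, f x ∂(mix P₀ P₁ (1 / 2)))
      = (1 / 2 - α) * (∫ x, f x ∂P₀ - ∫ x, f x ∂P₁) := by
    intro f hf
    rw [integral_mix P₀ P₁ h0 h1 (hint f hf).1 (hint f hf).2,
      integral_mix P₀ P₁ (by norm_num) (by norm_num) (hint f hf).1 (hint f hf).2]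
    ring
  have hnegval : ∀ f ∈ F, (∫ x, (-f x) ∂P₀ - ∫ x, (-f x) ∂P₁)
      = -(∫ x, f x ∂P₀ - ∫ x, f x ∂P₁) := by
    intro f hf
    rw [integral_neg, integral_neg]; ring
  have key : ((fun f => ∫ x, f x ∂(mix P₀ P₁ α) - ∫ x, f x ∂(mix P₀ P₁ (1 / 2))) '' F)
      = |1 / 2 - α| • ((fun f => ∫ x, f x ∂P₀ - ∫ x, f x ∂P₁) '' F) := by
    ext r
    simp only [Set.mem_image, Set.mem_smul_set]
    constructor
    · rintro ⟨f, hf, rfl⟩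
      rcases le_or_gt 0 (1 / 2 - α) with hc | hc
      · exact ⟨_, ⟨f, hf, rfl⟩, by rw [hval f hf, smul_eq_mul, abs_of_nonneg hc]⟩
      · refine ⟨_, ⟨_, hneg f hf, rfl⟩, ?_⟩
        rw [hval f hf, smul_eq_mul, hnegval f hf, abs_of_neg hc]
        ring
    · rintro ⟨_, ⟨f, hf, rfl⟩, rfl⟩
      rcases le_or_gt 0 (1 / 2 - α) with hc | hc
      · exact ⟨f, hf, by rw [hval f hf, smul_eq_mul, abs_of_nonneg hc]⟩
      · refine ⟨_, hneg f hf, ?_⟩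
        rw [hval _ (hneg f hf), smul_eq_mul, hnegval f hf, abs_of_neg hc]
        ring
  rw [IPM, IPM, key, Real.sSup_smul_of_nonneg (abs_nonneg _), smul_eq_mul]

lemma pi_mix_eq (P₀ P₁ : Measure X) [IsProbabilityMeasure P₀] [IsProbabilityMeasure P₁]
    (m : ℕ) {α : ℝ} (h0 : 0 ≤ α) (h1 : α ≤ 1) :
    (Measure.pi fun _ : Fin m => mix P₀ P₁ α)
      = ∑ s : Fin m → Bool,
          (∏ i, (if s i then ENNReal.ofReal α else ENNReal.ofReal (1 - α))) •
            Measure.pi (fun i => if s i then P₁ else P₀) := by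
  haveI := mix_isProb P₀ P₁ h0 h1
  haveI : ∀ (s : Fin m → Bool) (i : Fin m), SigmaFinite (if s i then P₁ else P₀) := by
    intro s i; split <;> infer_instance
  refine Measure.pi_eq ?_
  intro B hB
  rw [Measure.finset_sum_apply]
  have hpick : ∀ s : Fin m → Bool,
      (Measure.pi fun i => if s i then P₁ else P₀) (Set.univ.pi B)
        = ∏ i, (if s i then P₁ else P₀) (B i) := fun s => Measure.pi_pi _ _
  simp only [Measure.smul_apply, smul_eq_mul, hpick]
  have hmix : ∀ i : Fin m, (mix P₀ P₁ α) (B i)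
      = ∑ b : Bool, (if b then ENNReal.ofReal α else ENNReal.ofReal (1 - α))
          * (if b then P₁ else P₀) (B i) := by
    intro i
    simp [mix, Measure.add_apply, Measure.smul_apply, smul_eq_mul, add_comm]
  calc ∑ s : Fin m → Bool,
        (∏ i, (if s i then ENNReal.ofReal α else ENNReal.ofReal (1 - α)))
          * ∏ i, (if s i then P₁ else P₀) (B i)
      = ∑ s : Fin m → Bool, ∏ i,
          ((if s i then ENNReal.ofReal α else ENNReal.ofReal (1 - α))
            * (if s i then P₁ else P₀) (B i)) :=
        Finset.sum_congr rfl fun s _ => (Finset.prod_mul_distrib).symm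
    _ = ∏ i, ∑ b : Bool, ((if b then ENNReal.ofReal α else ENNReal.ofReal (1 - α))
            * (if b then P₁ else P₀) (B i)) := by
        rw [Finset.prod_univ_sum]
        rw [Fintype.piFinset_univ]
    _ = ∏ i, (mix P₀ P₁ α) (B i) := Finset.prod_congr rfl fun i _ => (hmix i).symm

end Aux

/-- No unbiased estimator of an IPM exists on a family containing all mixtures of two
fixed distinct distributions `P₀ ≠ P₁` with `D(P₀,P₁) > 0`. -/
theorem no_unbiased_ipm_estimator {X : Type*} [MeasurableSpace X]
    (F : Set (X → ℝ))
    (hmeas : ∀ f ∈ F, Measurable f)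
    (hbdd : ∀ f ∈ F, ∃ C : ℝ, ∀ x, |f x| ≤ C)
    (hneg : ∀ f ∈ F, (fun x => -f x) ∈ F)
    (P₀ P₁ : Measure X) [IsProbabilityMeasure P₀] [IsProbabilityMeasure P₁]
    (hne : P₀ ≠ P₁)
    (hfin : BddAbove ((fun f => ∫ x, f x ∂P₀ - ∫ x, f x ∂P₁) '' F))
    (hpos : 0 < IPM F P₀ P₁)
    (m n : ℕ)
    (Dhat : (Fin m → X) × (Fin n → X) → ℝ)
    (hDmeas : Measurable Dhat)
    (hDint : ∀ α ∈ Set.Icc (0 : ℝ) 1,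
      Integrable Dhat
        ((Measure.pi fun _ : Fin m => mix P₀ P₁ α).prod
          (Measure.pi fun _ : Fin n => mix P₀ P₁ (1 / 2)))) :
    ¬ (∀ α ∈ Set.Icc (0 : ℝ) 1,
        (∫ xy, Dhat xy
            ∂((Measure.pi fun _ : Fin m => mix P₀ P₁ α).prod
              (Measure.pi fun _ : Fin n => mix P₀ P₁ (1 / 2))))
          = IPM F (mix P₀ P₁ α) (mix P₀ P₁ (1 / 2))) := by
  intro H
  haveI : IsProbabilityMeasure (mix P₀ P₁ (1 / 2)) :=
    mix_isProb P₀ P₁ (by norm_num) (by norm_num)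
  set ν : Measure (Fin n → X) := Measure.pi fun _ : Fin n => mix P₀ P₁ (1 / 2) with hν
  haveI : IsProbabilityMeasure ν := by rw [hν]; infer_instance
  haveI : ∀ (s : Fin m → Bool) (i : Fin m), SigmaFinite (if s i then P₁ else P₀) := by
    intro s i; split <;> infer_instance
  set K : (Fin m → Bool) → ℝ := fun s =>
    ∫ x, (∫ y, Dhat (x, y) ∂ν) ∂(Measure.pi fun i => if s i then P₁ else P₀) with hK
  set p : ℝ → ℝ := fun α =>
    ∑ s : Fin m → Bool, (∏ i, (if s i then α else 1 - α)) * K s with hp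
  -- the expectation equals the polynomial p on [0,1]
  have hg : ∀ α ∈ Set.Icc (0 : ℝ) 1,
      (∫ xy, Dhat xy ∂((Measure.pi fun _ : Fin m => mix P₀ P₁ α).prod ν)) = p α := by
    rintro α ⟨h0, h1⟩
    haveI := mix_isProb P₀ P₁ h0 h1
    rw [integral_prod _ (hDint α ⟨h0, h1⟩)]
    have hint : Integrable (fun x => ∫ y, Dhat (x, y) ∂ν)
        (Measure.pi fun _ : Fin m => mix P₀ P₁ α) :=
      (hDint α ⟨h0, h1⟩).integral_prod_left
    rw [pi_mix_eq P₀ P₁ m h0 h1] at hint ⊢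
    have hle : ∀ s : Fin m → Bool,
        ((∏ i, (if s i then ENNReal.ofReal α else ENNReal.ofReal (1 - α))) •
          Measure.pi (fun i => if s i then P₁ else P₀))
          ≤ ∑ s' : Fin m → Bool,
            (∏ i, (if s' i then ENNReal.ofReal α else ENNReal.ofReal (1 - α))) •
              Measure.pi (fun i => if s' i then P₁ else P₀) := by
      intro s
      refine Measure.le_iff.2 fun t _ => ?_
      rw [Measure.finset_sum_apply]
      exact Finset.single_le_sum (f := fun s' : Fin m → Bool =>
        ((∏ i, (if s' i then ENNReal.ofReal α else ENNReal.ofReal (1 - α))) •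
          Measure.pi (fun i => if s' i then P₁ else P₀)) t)
        (fun _ _ => zero_le) (Finset.mem_univ s)
    rw [integral_finset_sum_measure (fun s _ => hint.mono_measure (hle s))]
    refine Finset.sum_congr rfl fun s _ => ?_
    rw [integral_smul_measure, smul_eq_mul]
    congr 1
    rw [ENNReal.toReal_prod]
    refine Finset.prod_congr rfl fun i _ => ?_
    split
    · exact ENNReal.toReal_ofReal h0
    · exact ENNReal.toReal_ofReal (by linarith)
  -- p equals |1/2 - α| * c on [0,1]
  set c : ℝ := IPM F P₀ P₁ with hc
  have hpc : ∀ α ∈ Set.Icc (0 : ℝ) 1, p α = |1 / 2 - α| * c := by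
    rintro α ⟨h0, h1⟩
    rw [← hg α ⟨h0, h1⟩, H α ⟨h0, h1⟩, ipm_mix F hmeas hbdd hneg P₀ P₁ h0 h1]
  -- p is differentiable at 1/2
  have hpd : DifferentiableAt ℝ p (1 / 2) := by
    have hpeq : p = ∑ s : Fin m → Bool, fun α : ℝ => (∏ i, (if s i then α else 1 - α)) * K s := by
      funext α
      rw [Finset.sum_apply]
    rw [hpeq]
    refine DifferentiableAt.sum fun s _ => DifferentiableAt.mul_const ?_ _
    refine DifferentiableAt.fun_finsetProd fun i _ => ?_
    cases hsi : s i
    · simp only [hsi, Bool.false_eq_true, if_false]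
      exact (differentiableAt_const _).sub differentiableAt_id
    · simp only [hsi, if_true]
      exact differentiableAt_id
  -- hence |1/2 - α| * c is differentiable at 1/2
  have hev : (fun α => |1 / 2 - α| * c) =ᶠ[nhds (1 / 2 : ℝ)] p := by
    filter_upwards [Icc_mem_nhds (by norm_num : (0:ℝ) < 1/2) (by norm_num : (1/2:ℝ) < 1)]
      with α hα
    exact (hpc α hα).symm
  have habs : DifferentiableAt ℝ (fun α => |1 / 2 - α| * c) (1 / 2) :=
    hpd.congr_of_eventuallyEq hev
  have habs2 : DifferentiableAt ℝ (fun α : ℝ => |1 / 2 - α|) (1 / 2) := by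
    have heq : (fun α : ℝ => |1 / 2 - α|) = fun α : ℝ => (|1 / 2 - α| * c) * c⁻¹ := by
      funext x
      rw [mul_assoc, mul_inv_cancel₀ (ne_of_gt hpos), mul_one]
    rw [heq]
    exact habs.mul_const _
  have hinner : DifferentiableAt ℝ (fun x : ℝ => 1 / 2 - x) 0 :=
    (differentiableAt_const _).sub differentiableAt_id
  have h12 : DifferentiableAt ℝ (fun α : ℝ => |1 / 2 - α|) ((fun x : ℝ => 1 / 2 - x) 0) := by
    simpa using habs2
  have hcomp := h12.comp 0 hinner
  have heq2 : ((fun α : ℝ => |1 / 2 - α|) ∘ (fun x : ℝ => 1 / 2 - x)) = abs := by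
    funext x
    simp [Function.comp, sub_sub_cancel]
  rw [heq2] at hcomp
  exact not_differentiableAt_abs_zero hcomp
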